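/- arXiv:1201.6015 — 2 statements merged into one kernel-verified Lean document; each statement's English description precedes it below -/
import Mathlib

section
/- For α ∈ (0,2), α ≠ 1, u(x) = 1 - x² on (-1,1) and u = 0 outside, the nonlocal operator applied to u satisfies ∫_{ℝ∖{0}} [u(x+y) - u(x) - 1_{|y|<δ(x)} y u'(x)] |y|^{-(1+α)} dy = -(1+x)^{1-α}((1-x)/α - 2x/(1-α) + (1+x)/(2-α)) - (1-x)^{1-α}((1+x)/α + 2x/(1-α) + (1-x)/(2-α)) for x ∈ (-1,1), where δ(x) = min(1+x, 1-x) and the integral is a principal value. -/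
open MeasureTheory Filter Set Real

private lemma integrableOn_comp_neg' {g : ℝ → ℝ} {s : Set ℝ}
    (h : IntegrableOn g s volume) :
    IntegrableOn (fun y => g (-y)) ((fun y : ℝ => -y) ⁻¹' s) volume := by
  have m : MeasurableEmbedding (fun x : ℝ => -x) :=
    (Homeomorph.neg ℝ).measurableEmbedding
  have h2 := m.integrableOn_map_iff (f := g) (μ := volume) (s := s)
  rw [Measure.map_neg_eq_self] at h2
  exact h2.mp h

private lemma setIntegral_comp_neg_symm' {F : ℝ → ℝ} {s : Set ℝ} (hs : MeasurableSet s)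
    (hsym : ∀ y : ℝ, -y ∈ s ↔ y ∈ s) :
    ∫ y in s, F (-y) = ∫ y in s, F y := by
  rw [← integral_indicator hs, ← integral_indicator hs]
  have h : ∀ y : ℝ, s.indicator (fun y => F (-y)) y = s.indicator F (-y) := by
    intro y
    by_cases hy : y ∈ s
    · rw [indicator_of_mem hy, indicator_of_mem ((hsym y).mpr hy)]
    · rw [indicator_of_notMem hy, indicator_of_notMem (fun h => hy ((hsym y).mp h))]
  simp_rw [h]
  exact integral_neg_eq_self (s.indicator F) volume

private lemma key (α x : ℝ) (h0 : 0 < α) (h2 : α < 2) (h1 : α ≠ 1)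
    (hx1 : -1 < x) (hx0 : x ≤ 0) :
    Tendsto (fun ε : ℝ => ∫ y in {y : ℝ | ε < |y|},
        ((if x + y ∈ Set.Ioo (-1:ℝ) 1 then 1 - (x + y) ^ 2 else 0) - (1 - x ^ 2)
          - (if |y| < 1 + x then y * (-(2 * x)) else 0)) * |y| ^ (-(1 + α)))
      (nhdsWithin 0 (Set.Ioi 0))
      (nhds (-((1 + x) ^ (1 - α) * ((1 - x) / α - 2 * x / (1 - α) + (1 + x) / (2 - α)))
        - (1 - x) ^ (1 - α) * ((1 + x) / α + 2 * x / (1 - α) + (1 - x) / (2 - α)))) := by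
  set F : ℝ → ℝ := fun y =>
    ((if x + y ∈ Set.Ioo (-1:ℝ) 1 then 1 - (x + y) ^ 2 else 0) - (1 - x ^ 2)
      - (if |y| < 1 + x then y * (-(2 * x)) else 0)) * |y| ^ (-(1 + α)) with hF
  have ha : (0:ℝ) < 1 + x := by linarith
  have hb : (0:ℝ) < 1 - x := by linarith
  -- pointwise formulas
  have hF1 : ∀ y ∈ Iic (-(1+x)), F y = (-((1+x)*(1-x))) * (-y) ^ (-(1+α)) := by
    intro y hy
    simp only [mem_Iic] at hy
    have hy0 : y ≤ 0 := by linarith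
    have h₁ : x + y ∉ Set.Ioo (-1:ℝ) 1 := by
      simp only [mem_Ioo, not_and, not_lt]; intro h; linarith
    have h₂ : ¬ |y| < 1 + x := by rw [abs_of_nonpos hy0, not_lt]; linarith
    rw [hF]
    simp only [if_neg h₁, if_neg h₂]; rw [abs_of_nonpos hy0]
    ring
  have hF2 : ∀ y : ℝ, -(1+x) < y → y < 0 → F y = -((-y) ^ (1 - α)) := by
    intro y hy1 hy2
    have hy' : (0:ℝ) < -y := by linarith
    have h₁ : x + y ∈ Set.Ioo (-1:ℝ) 1 := ⟨by linarith, by linarith⟩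
    have h₂ : |y| < 1 + x := by rw [abs_of_nonpos hy2.le]; linarith
    rw [hF]
    simp only [if_pos h₁, if_pos h₂]; rw [abs_of_nonpos hy2.le]
    rw [show (1:ℝ) - α = 2 + (-(1 + α)) by ring, rpow_add hy',
      show ((2:ℝ)) = ((2:ℕ):ℝ) by norm_num, rpow_natCast]
    ring
  have hF3 : ∀ y : ℝ, 0 < y → y < 1 + x → F y = -(y ^ (1 - α)) := by
    intro y hy1 hy2
    have h₁ : x + y ∈ Set.Ioo (-1:ℝ) 1 := ⟨by linarith, by linarith⟩
    have h₂ : |y| < 1 + x := by rw [abs_of_pos hy1]; linarith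
    rw [hF]
    simp only [if_pos h₁, if_pos h₂]; rw [abs_of_pos hy1]
    rw [show (1:ℝ) - α = 2 + (-(1 + α)) by ring, rpow_add hy1,
      show ((2:ℝ)) = ((2:ℕ):ℝ) by norm_num, rpow_natCast]
    ring
  have hF4 : ∀ y : ℝ, 1 + x < y → y < 1 - x →
      F y = (-(2*x)) * y ^ (-α) - y ^ (1 - α) := by
    intro y hy1 hy2
    have hy : (0:ℝ) < y := by linarith
    have h₁ : x + y ∈ Set.Ioo (-1:ℝ) 1 := ⟨by linarith, by linarith⟩
    have h₂ : ¬ |y| < 1 + x := by rw [abs_of_pos hy, not_lt]; linarith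
    rw [hF]
    simp only [if_pos h₁, if_neg h₂]; rw [abs_of_pos hy]
    rw [show -α = 1 + (-(1 + α)) by ring, rpow_add hy, rpow_one,
      show (1:ℝ) - α = 2 + (-(1 + α)) by ring, rpow_add hy,
      show ((2:ℝ)) = ((2:ℕ):ℝ) by norm_num, rpow_natCast]
    ring
  have hF5 : ∀ y ∈ Ici (1-x), F y = (-((1+x)*(1-x))) * y ^ (-(1+α)) := by
    intro y hy
    simp only [mem_Ici] at hy
    have hy0 : (0:ℝ) < y := by linarith
    have h₁ : x + y ∉ Set.Ioo (-1:ℝ) 1 := by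
      simp only [mem_Ioo, not_and, not_lt]; intro h; linarith
    have h₂ : ¬ |y| < 1 + x := by rw [abs_of_pos hy0, not_lt]; linarith
    rw [hF]
    simp only [if_neg h₁, if_neg h₂]; rw [abs_of_pos hy0]
    ring
  -- main computation for small ε
  have hmain : ∀ ε : ℝ, 0 < ε → ε < 1 + x →
      (∫ y in {y : ℝ | ε < |y|}, F y)
        = (-((1 + x) ^ (1 - α) * ((1 - x) / α - 2 * x / (1 - α) + (1 + x) / (2 - α)))
          - (1 - x) ^ (1 - α) * ((1 + x) / α + 2 * x / (1 - α) + (1 - x) / (2 - α)))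
          + 2 * ε ^ (2 - α) / (2 - α) := by
    intro ε hε hεa
    have ha : (0:ℝ) < 1 + x := by linarith
    have hb : (0:ℝ) < 1 - x := by linarith
    have hab : (1:ℝ) + x ≤ 1 - x := by linarith
    have hα0 : α ≠ 0 := ne_of_gt h0
    have hn1 : (1:ℝ) - α ≠ 0 := fun h => h1 (by linarith)
    have hn2 : (2:ℝ) - α ≠ 0 := ne_of_gt (by linarith)
    have hexp1 : (-1:ℝ) < 1 - α := by linarith
    have hexp2 : -(1 + α) < (-1:ℝ) := by linarith
    -- basic integrability facts
    have iTail : ∀ c : ℝ, 0 < c → IntegrableOn (fun y : ℝ => y ^ (-(1+α))) (Ioi c) :=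
      fun c hc => integrableOn_Ioi_rpow_of_lt hexp2 hc
    -- integrability of F on the five pieces
    have i1 : IntegrableOn F (Iic (-(1+x))) := by
      have base : IntegrableOn (fun z : ℝ => (-((1+x)*(1-x))) * z ^ (-(1+α))) (Ici (1+x)) :=
        (Iff.mpr integrableOn_Ici_iff_integrableOn_Ioi (iTail _ ha)).const_mul _
      have hpre : (fun y : ℝ => -y) ⁻¹' (Ici (1+x)) = Iic (-(1+x)) := by
        ext y; simp [le_neg]
      have := integrableOn_comp_neg' base
      rw [hpre] at this
      exact this.congr_fun (fun y hy => (hF1 y hy).symm) measurableSet_Iic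
    have i2 : IntegrableOn F (Ioo (-(1+x)) (-ε)) := by
      have base : IntegrableOn (fun z : ℝ => -(z ^ (1-α))) (Ioc ε (1+x)) :=
        ((intervalIntegral.intervalIntegrable_rpow' hexp1).1.neg)
      have hpre : (fun y : ℝ => -y) ⁻¹' (Ioc ε (1+x)) = Ico (-(1+x)) (-ε) := by
        ext y
        simp only [mem_preimage, mem_Ioc, mem_Ico]
        constructor <;> rintro ⟨p, q⟩ <;> constructor <;> linarith
      have := integrableOn_comp_neg' base
      rw [hpre] at this
      exact (this.mono_set Ioo_subset_Ico_self).congr_fun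
        (fun y hy => (hF2 y hy.1 (by linarith [hy.2])).symm) measurableSet_Ioo
    have i3 : IntegrableOn F (Ioc ε (1+x)) := by
      have base0 : IntegrableOn (fun z : ℝ => -(z ^ (1-α))) (Ioc ε (1+x)) :=
        (intervalIntegral.intervalIntegrable_rpow' hexp1).1.neg
      have base : IntegrableOn (fun z : ℝ => -(z ^ (1-α))) (Ioo ε (1+x)) :=
        base0.mono_set Ioo_subset_Ioc_self
      exact (base.congr_fun (fun y hy => (hF3 y (by linarith [hy.1]) hy.2).symm)
        measurableSet_Ioo).congr_set_ae (Ioo_ae_eq_Ioc (μ := volume)).symm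
    have h0ab : (0:ℝ) ∉ Set.uIcc (1+x) (1-x) := notMem_uIcc_of_lt ha hb
    have i4 : IntegrableOn F (Ioc (1+x) (1-x)) := by
      have b1 : IntervalIntegrable (fun z : ℝ => z ^ (-α)) volume (1+x) (1-x) :=
        intervalIntegral.intervalIntegrable_rpow (Or.inr h0ab)
      have b2 : IntervalIntegrable (fun z : ℝ => z ^ (1-α)) volume (1+x) (1-x) :=
        intervalIntegral.intervalIntegrable_rpow' hexp1
      have base : IntegrableOn (fun z : ℝ => (-(2*x)) * z ^ (-α) - z ^ (1-α)) (Ioc (1+x) (1-x)) := by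
        rw [← intervalIntegrable_iff_integrableOn_Ioc_of_le hab]
        exact (b1.const_mul _).sub b2
      exact ((base.mono_set Ioo_subset_Ioc_self).congr_fun
        (fun y hy => (hF4 y hy.1 hy.2).symm) measurableSet_Ioo).congr_set_ae
        (Ioo_ae_eq_Ioc (μ := volume)).symm
    have i5 : IntegrableOn F (Ioi (1-x)) := by
      have base : IntegrableOn (fun z : ℝ => (-((1+x)*(1-x))) * z ^ (-(1+α))) (Ioi (1-x)) :=
        (iTail _ hb).const_mul _
      exact base.congr_fun (fun y hy => (hF5 y (mem_Ici.mpr (le_of_lt hy))).symm) measurableSet_Ioi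
    -- the five integral values
    have hE : ∫ y in Iic (-(1+x)), F y = -((1-x) * (1+x) ^ (1-α) / α) := by
      rw [setIntegral_congr_fun measurableSet_Iic hF1]
      rw [integral_comp_neg_Iic (-(1+x)) (fun z : ℝ => (-((1+x)*(1-x))) * z ^ (-(1+α)))]
      rw [neg_neg, integral_const_mul, integral_Ioi_rpow_of_lt hexp2 ha]
      rw [show -(1+α) + 1 = (1 - α) - 1 by ring, rpow_sub ha, rpow_one]
      field_simp
      ring_nf
      simp [hα0]
    have hA : ∫ y in Ioo (-(1+x)) (-ε), F y
        = -(((1+x) ^ (2-α) - ε ^ (2-α)) / (2-α)) := by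
      rw [setIntegral_congr_fun measurableSet_Ioo
        (fun y hy => hF2 y hy.1 (by linarith [hy.2]))]
      rw [setIntegral_congr_set (Ioo_ae_eq_Ioc (μ := volume))]
      rw [← intervalIntegral.integral_of_le (by linarith : -(1+x) ≤ -ε)]
      rw [intervalIntegral.integral_comp_neg (fun z : ℝ => -(z ^ (1-α)))]
      rw [neg_neg, neg_neg, intervalIntegral.integral_neg,
        integral_rpow (Or.inl hexp1),
        show (1:ℝ) - α + 1 = 2 - α by ring]
    have hB : ∫ y in Ioc ε (1+x), F y = -(((1+x) ^ (2-α) - ε ^ (2-α)) / (2-α)) := by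
      rw [setIntegral_congr_set (Ioo_ae_eq_Ioc (μ := volume)).symm]
      rw [setIntegral_congr_fun measurableSet_Ioo
        (fun y hy => hF3 y (by linarith [hy.1]) hy.2)]
      rw [setIntegral_congr_set (Ioo_ae_eq_Ioc (μ := volume))]
      rw [← intervalIntegral.integral_of_le (by linarith : ε ≤ 1 + x)]
      rw [intervalIntegral.integral_neg, integral_rpow (Or.inl hexp1),
        show (1:ℝ) - α + 1 = 2 - α by ring]
    have hC : ∫ y in Ioc (1+x) (1-x), F y
        = (-(2*x)) * (((1-x) ^ (1-α) - (1+x) ^ (1-α)) / (1-α))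
          - (((1-x) ^ (2-α) - (1+x) ^ (2-α)) / (2-α)) := by
      rw [setIntegral_congr_set (Ioo_ae_eq_Ioc (μ := volume)).symm]
      rw [setIntegral_congr_fun measurableSet_Ioo (fun y hy => hF4 y hy.1 hy.2)]
      rw [setIntegral_congr_set (Ioo_ae_eq_Ioc (μ := volume))]
      rw [← intervalIntegral.integral_of_le hab]
      have b1 : IntervalIntegrable (fun z : ℝ => (-(2*x)) * z ^ (-α)) volume (1+x) (1-x) :=
        (intervalIntegral.intervalIntegrable_rpow (Or.inr h0ab)).const_mul _
      have b2 : IntervalIntegrable (fun z : ℝ => z ^ (1-α)) volume (1+x) (1-x) :=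
        intervalIntegral.intervalIntegrable_rpow' hexp1
      rw [intervalIntegral.integral_sub b1 b2, intervalIntegral.integral_const_mul,
        integral_rpow (Or.inr ⟨fun h => h1 (by linarith), h0ab⟩),
        integral_rpow (Or.inl hexp1),
        show -α + 1 = 1 - α by ring, show (1:ℝ) - α + 1 = 2 - α by ring]
    have hD : ∫ y in Ioi (1-x), F y = -((1+x) * (1-x) ^ (1-α) / α) := by
      rw [setIntegral_congr_fun measurableSet_Ioi (fun y hy => hF5 y (mem_Ici.mpr (le_of_lt hy)))]
      rw [integral_const_mul, integral_Ioi_rpow_of_lt hexp2 hb]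
      rw [show -(1+α) + 1 = (1 - α) - 1 by ring, rpow_sub hb, rpow_one]
      field_simp
      ring_nf
      simp [hα0]
    -- decompose the domain
    have hset : {y : ℝ | ε < |y|} = Iio (-ε) ∪ Ioi ε := by
      ext y
      simp only [mem_setOf_eq, lt_abs, mem_union, mem_Iio, mem_Ioi]
      constructor <;> rintro (h | h)
      · right; exact h
      · left; linarith
      · right; linarith
      · left; exact h
    have hIio : Iio (-ε) = Iic (-(1+x)) ∪ Ioo (-(1+x)) (-ε) := by
      ext y
      simp only [mem_Iio, mem_union, mem_Iic, mem_Ioo]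
      constructor
      · intro h
        rcases le_or_gt y (-(1+x)) with h' | h'
        · exact Or.inl h'
        · exact Or.inr ⟨h', h⟩
      · rintro (h | ⟨_, h⟩) <;> linarith
    have hIoi : Ioi ε = Ioc ε (1+x) ∪ (Ioc (1+x) (1-x) ∪ Ioi (1-x)) := by
      rw [Ioc_union_Ioi_eq_Ioi hab, Ioc_union_Ioi_eq_Ioi (le_of_lt hεa)]
    have d1 : Disjoint (Iic (-(1+x))) (Ioo (-(1+x)) (-ε)) :=
      (Iic_disjoint_Ioi le_rfl).mono_right Ioo_subset_Ioi_self
    have d2 : Disjoint (Ioc (1+x) (1-x)) (Ioi (1-x)) := by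
      rw [Set.disjoint_left]; rintro y ⟨_, hy1⟩ hy2; exact absurd hy2 (not_lt.mpr hy1)
    have d3 : Disjoint (Ioc ε (1+x)) (Ioc (1+x) (1-x) ∪ Ioi (1-x)) := by
      rw [Set.disjoint_left]
      rintro y ⟨_, hy1⟩ (⟨hy2, _⟩ | hy2)
      · exact absurd hy2 (not_lt.mpr hy1)
      · exact absurd (mem_Ioi.mp hy2) (not_lt.mpr (by linarith))
    have d0 : Disjoint (Iio (-ε)) (Ioi ε) := by
      rw [Set.disjoint_left]; intro y hy1 hy2
      simp only [mem_Iio] at hy1; simp only [mem_Ioi] at hy2; linarith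
    rw [hset, setIntegral_union d0 measurableSet_Ioi
      (by rw [hIio]; exact i1.union i2)
      (by rw [hIoi]; exact i3.union (i4.union i5))]
    rw [hIio, setIntegral_union d1 measurableSet_Ioo i1 i2, hIoi,
      setIntegral_union d3 (measurableSet_Ioc.union measurableSet_Ioi) i3 (i4.union i5),
      setIntegral_union d2 measurableSet_Ioi i4 i5]
    rw [hE, hA, hB, hC, hD]
    rw [show ((1:ℝ)+x) ^ ((2:ℝ)-α) = (1+x) * (1+x) ^ ((1:ℝ)-α) by
        rw [show (2:ℝ) - α = 1 + (1-α) by ring, rpow_add ha, rpow_one],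
      show ((1:ℝ)-x) ^ ((2:ℝ)-α) = (1-x) * (1-x) ^ ((1:ℝ)-α) by
        rw [show (2:ℝ) - α = 1 + (1-α) by ring, rpow_add hb, rpow_one]]
    field_simp
    ring
  -- limit
  have h2α : (0:ℝ) < 2 - α := by linarith
  have t1 : Tendsto (fun ε : ℝ => ε ^ (2-α)) (nhds 0) (nhds 0) := by
    have c := (Real.continuousAt_rpow_const 0 (2-α) (Or.inr h2α.le)).tendsto
    rwa [Real.zero_rpow (ne_of_gt h2α)] at c
  have t2 := ((((t1.mono_left (nhdsWithin_le_nhds (s := Set.Ioi (0:ℝ)))).const_mul (2:ℝ)).div_const (2-α)).const_add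
    (-((1 + x) ^ (1 - α) * ((1 - x) / α - 2 * x / (1 - α) + (1 + x) / (2 - α)))
      - (1 - x) ^ (1 - α) * ((1 + x) / α + 2 * x / (1 - α) + (1 - x) / (2 - α))))
  have t3 : Tendsto (fun ε : ℝ =>
      (-((1 + x) ^ (1 - α) * ((1 - x) / α - 2 * x / (1 - α) + (1 + x) / (2 - α)))
        - (1 - x) ^ (1 - α) * ((1 + x) / α + 2 * x / (1 - α) + (1 - x) / (2 - α)))
        + 2 * ε ^ (2 - α) / (2 - α))
      (nhdsWithin 0 (Set.Ioi 0))
      (nhds (-((1 + x) ^ (1 - α) * ((1 - x) / α - 2 * x / (1 - α) + (1 + x) / (2 - α)))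
        - (1 - x) ^ (1 - α) * ((1 + x) / α + 2 * x / (1 - α) + (1 - x) / (2 - α)))) := by
    simpa using t2
  apply t3.congr'
  filter_upwards [Ioo_mem_nhdsGT ha] with ε hε
  exact (hmain ε hε.1 hε.2).symm

/-- For u(x) = 1 - x² on (-1,1), 0 outside, and α ∈ (0,2), α ≠ 1, the nonlocal
operator (as a principal value) evaluates to the given closed form. -/
theorem stmt_3 (α : ℝ) (hα : α ∈ Set.Ioo (0 : ℝ) 2) (hα1 : α ≠ 1)
    (u : ℝ → ℝ) (hu : u = fun x => if x ∈ Set.Ioo (-1 : ℝ) 1 then 1 - x ^ 2 else 0)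
    (x : ℝ) (hx : x ∈ Set.Ioo (-1 : ℝ) 1)
    (δ : ℝ) (hδ : δ = min (1 + x) (1 - x)) :
    Tendsto (fun ε : ℝ =>
        ∫ y in {y : ℝ | ε < |y|},
          (u (x + y) - u x - (if |y| < δ then y * (-(2 * x)) else 0)) * |y| ^ (-(1 + α)))
      (nhdsWithin 0 (Set.Ioi 0))
      (nhds (-((1 + x) ^ (1 - α) * ((1 - x) / α - 2 * x / (1 - α) + (1 + x) / (2 - α)))
        - (1 - x) ^ (1 - α) * ((1 + x) / α + 2 * x / (1 - α) + (1 - x) / (2 - α)))) := by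
  obtain ⟨hx1, hx2⟩ := hx
  obtain ⟨hα0, hα2⟩ := hα
  subst hu hδ
  beta_reduce
  rw [show (if x ∈ Set.Ioo (-1:ℝ) 1 then 1 - x ^ 2 else 0) = 1 - x ^ 2 from
    if_pos ⟨hx1, hx2⟩]
  rcases le_or_gt x 0 with hxle | hxgt
  · rw [show min (1 + x) (1 - x) = 1 + x from min_eq_left (by linarith)]
    exact key α x hα0 hα2 hα1 hx1 hxle
  · rw [show min (1 + x) (1 - x) = 1 - x from min_eq_right (by linarith)]
    have K := key α (-x) hα0 hα2 hα1 (by linarith) (by linarith)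
    have hlim : (-((1 + x) ^ (1 - α) * ((1 - x) / α - 2 * x / (1 - α) + (1 + x) / (2 - α)))
        - (1 - x) ^ (1 - α) * ((1 + x) / α + 2 * x / (1 - α) + (1 - x) / (2 - α)))
        = (-((1 + -x) ^ (1 - α) * ((1 - -x) / α - 2 * -x / (1 - α) + (1 + -x) / (2 - α)))
        - (1 - -x) ^ (1 - α) * ((1 + -x) / α + 2 * -x / (1 - α) + (1 - -x) / (2 - α))) := by
      rw [show (1:ℝ) + -x = 1 - x by ring, show (1:ℝ) - -x = 1 + x by ring]
      ring
    rw [hlim]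
    set G : ℝ → ℝ := fun y =>
      ((if x + y ∈ Set.Ioo (-1:ℝ) 1 then 1 - (x + y) ^ 2 else 0) - (1 - x ^ 2)
        - (if |y| < 1 - x then y * (-(2 * x)) else 0)) * |y| ^ (-(1 + α)) with hG
    have hKG : ∀ y : ℝ,
        ((if -x + y ∈ Set.Ioo (-1:ℝ) 1 then 1 - (-x + y) ^ 2 else 0) - (1 - (-x) ^ 2)
          - (if |y| < 1 + -x then y * (-(2 * -x)) else 0)) * |y| ^ (-(1 + α)) = G (-y) := by
      intro y
      rw [hG]
      simp only [abs_neg, show (1:ℝ) + -x = 1 - x from by ring,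
        show (1:ℝ) - (-x) ^ 2 = 1 - x ^ 2 from by ring,
        show (1:ℝ) - (-x + y) ^ 2 = 1 - (x + -y) ^ 2 from by ring,
        show y * (-(2 * -x)) = (-y) * (-(2 * x)) from by ring,
        show ((-x + y ∈ Set.Ioo (-1:ℝ) 1)) = (x + -y ∈ Set.Ioo (-1:ℝ) 1) from by
          simp only [mem_Ioo, eq_iff_iff]
          constructor <;> rintro ⟨p, q⟩ <;> exact ⟨by linarith, by linarith⟩]
    apply Tendsto.congr _ K
    intro ε
    have hS : MeasurableSet {y : ℝ | ε < |y|} :=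
      measurableSet_lt measurable_const continuous_abs.measurable
    have hsym : ∀ y : ℝ, -y ∈ {y : ℝ | ε < |y|} ↔ y ∈ {y : ℝ | ε < |y|} := by
      intro y; simp [abs_neg]
    exact (setIntegral_congr_fun hS (fun y _ => hKG y)).trans
      (setIntegral_comp_neg_symm' hS hsym)
end

section
/- For α = 1 and u(x) = 1 - x² on (-1,1), u = 0 outside, for every x ∈ (-1,1) the principal value integral ∫_{ℝ∖{0}} [u(x+y) - u(x)] |y|^{-2} dy equals -(4 + 2x·ln((1-x)/(1+x))). -/
open MeasureTheory Filter Set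

lemma aux_int (c P m ε : ℝ) (hε : 0 < ε) (hεm : ε < m) (g : ℝ → ℝ)
    (hg1 : ∀ y ∈ Set.Ioo ε m, g y = c * y⁻¹ - 1)
    (hg2 : ∀ y ∈ Set.Ici m, g y = P * y ^ (-(2 : ℝ))) :
    IntegrableOn g (Set.Ioi ε) ∧
      ∫ y in Set.Ioi ε, g y = c * Real.log (m / ε) - (m - ε) + P / m := by
  have hm : 0 < m := hε.trans hεm
  have hcont : ContinuousOn (fun y : ℝ => c * y⁻¹ - 1) (Set.Icc ε m) := by
    exact ((continuousOn_const.mul (continuousOn_id.inv₀ fun y hy =>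
      ne_of_gt (lt_of_lt_of_le hε hy.1))).sub continuousOn_const)
  have I1 : IntegrableOn (fun y : ℝ => c * y⁻¹ - 1) (Set.Ioo ε m) :=
    (hcont.integrableOn_Icc).mono_set Set.Ioo_subset_Icc_self
  have Ig1 : IntegrableOn g (Set.Ioo ε m) :=
    I1.congr_fun (fun y hy => (hg1 y hy).symm) measurableSet_Ioo
  have I2 : IntegrableOn (fun y : ℝ => P * y ^ (-(2 : ℝ))) (Set.Ioi m) :=
    (integrableOn_Ioi_rpow_of_lt (by norm_num) hm).const_mul P
  have Ig2 : IntegrableOn g (Set.Ici m) := by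
    rw [integrableOn_Ici_iff_integrableOn_Ioi]
    exact I2.congr_fun (fun y hy => (hg2 y (Set.mem_Ici.mpr (le_of_lt hy))).symm) measurableSet_Ioi
  have hdisj : Disjoint (Set.Ioo ε m) (Set.Ici m) :=
    Set.disjoint_left.2 fun y hy hy' => (hy.2.not_ge hy')
  have hunion : Set.Ioo ε m ∪ Set.Ici m = Set.Ioi ε := Set.Ioo_union_Ici_eq_Ioi hεm
  constructor
  · rw [← hunion]; exact Ig1.union Ig2
  rw [← hunion, setIntegral_union hdisj measurableSet_Ici Ig1 Ig2]
  have e1 : ∫ y in Set.Ioo ε m, g y = c * Real.log (m / ε) - (m - ε) := by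
    rw [setIntegral_congr_fun measurableSet_Ioo hg1, ← integral_Ioc_eq_integral_Ioo,
      ← intervalIntegral.integral_of_le hεm.le]
    have hi1 : IntervalIntegrable (fun y : ℝ => c * y⁻¹) volume ε m := by
      apply ContinuousOn.intervalIntegrable
      rw [Set.uIcc_of_le hεm.le]
      exact continuousOn_const.mul (continuousOn_id.inv₀ fun y hy =>
        ne_of_gt (lt_of_lt_of_le hε hy.1))
    rw [intervalIntegral.integral_sub hi1 intervalIntegrable_const,
      intervalIntegral.integral_const_mul, integral_inv_of_pos hε hm,
      intervalIntegral.integral_const]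
    simp
  have e2 : ∫ y in Set.Ici m, g y = P / m := by
    rw [integral_Ici_eq_integral_Ioi,
      setIntegral_congr_fun measurableSet_Ioi (fun y hy => hg2 y (Set.mem_Ici.mpr (le_of_lt hy))),
      integral_const_mul, integral_Ioi_rpow_of_lt (by norm_num) hm]
    rw [show (-2 : ℝ) + 1 = -1 by norm_num, Real.rpow_neg_one]
    field_simp
  rw [e1, e2]

/-- For α = 1 and u(x) = 1 - x² on (-1,1), 0 outside, the principal value integral
∫ [u(x+y) - u(x)] |y|^{-2} dy equals -(4 + 2x ln((1-x)/(1+x))). -/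
theorem stmt_4 (u : ℝ → ℝ)
    (hu : u = fun x => if x ∈ Set.Ioo (-1 : ℝ) 1 then 1 - x ^ 2 else 0)
    (x : ℝ) (hx : x ∈ Set.Ioo (-1 : ℝ) 1) :
    Tendsto (fun ε : ℝ => ∫ y in {y : ℝ | ε < |y|}, (u (x + y) - u x) * |y| ^ (-(2 : ℝ)))
      (nhdsWithin 0 (Set.Ioi 0))
      (nhds (-(4 + 2 * x * Real.log ((1 - x) / (1 + x))))) := by
  obtain ⟨hx1, hx2⟩ := hx
  have ha : (0 : ℝ) < 1 - x := by linarith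
  have hb : (0 : ℝ) < 1 + x := by linarith
  set L : ℝ := Real.log ((1 - x) / (1 + x)) with hL
  have hux : u x = 1 - x ^ 2 := by rw [hu]; simp [Set.mem_Ioo, hx1, hx2]
  set g : ℝ → ℝ := fun y => (u (x + y) - u x) * |y| ^ (-(2 : ℝ)) with hg
  have habs : ∀ y : ℝ, 0 < y → (|y| : ℝ) ^ (-(2 : ℝ)) = (y ^ 2)⁻¹ := by
    intro y hy
    rw [abs_of_pos hy, Real.rpow_neg hy.le,
      show ((2 : ℝ)) = ((2 : ℕ) : ℝ) by norm_num, Real.rpow_natCast]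
  have key : ∀ ε : ℝ, ε ∈ Set.Ioo 0 (min (1 - x) (1 + x)) →
      (∫ y in {y : ℝ | ε < |y|}, g y) = -(4 + 2 * x * L) + 2 * ε := by
    intro ε hε
    obtain ⟨hε0, hεm⟩ := hε
    have hεa : ε < 1 - x := lt_of_lt_of_le hεm (min_le_left _ _)
    have hεb : ε < 1 + x := lt_of_lt_of_le hεm (min_le_right _ _)
    -- right piece
    have hr := aux_int (-2 * x) (-((1 - x) * (1 + x))) (1 - x) ε hε0 hεa g
      (by
        intro y hy
        obtain ⟨hy1, hy2⟩ := hy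
        have hy0 : 0 < y := hε0.trans hy1
        have hmem : x + y ∈ Set.Ioo (-1 : ℝ) 1 := ⟨by linarith, by linarith⟩
        rw [hg]
        simp only
        rw [habs y hy0, hux, hu]
        simp only [hmem, if_true]
        field_simp
        ring)
      (by
        intro y hy
        have hy' : 1 - x ≤ y := hy
        have hy0 : 0 < y := ha.trans_le hy'
        have hmem : x + y ∉ Set.Ioo (-1 : ℝ) 1 := by
          simp only [Set.mem_Ioo, not_and, not_lt]
          intro _; linarith
        rw [hg]
        simp only
        rw [habs y hy0, hux, hu]
        simp only [hmem, if_false]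
        rw [show ((0:ℝ) - (1 - x ^ 2)) = -((1 - x) * (1 + x)) by ring]
        rw [Real.rpow_neg hy0.le, show ((2 : ℝ)) = ((2 : ℕ) : ℝ) by norm_num,
          Real.rpow_natCast])
    -- left piece via negation
    have hl := aux_int (2 * x) (-((1 - x) * (1 + x))) (1 + x) ε hε0 hεb (fun y => g (-y))
      (by
        intro y hy
        obtain ⟨hy1, hy2⟩ := hy
        have hy0 : 0 < y := hε0.trans hy1
        have hmem : x + -y ∈ Set.Ioo (-1 : ℝ) 1 := ⟨by linarith, by linarith⟩
        rw [hg]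
        simp only
        rw [abs_neg, habs y hy0, hux, hu]
        simp only [hmem, if_true]
        field_simp
        ring)
      (by
        intro y hy
        have hy' : 1 + x ≤ y := hy
        have hy0 : 0 < y := hb.trans_le hy'
        have hmem : x + -y ∉ Set.Ioo (-1 : ℝ) 1 := by
          simp only [Set.mem_Ioo, not_and, not_lt]
          intro h; exfalso; linarith
        rw [hg]
        simp only
        rw [abs_neg, habs y hy0, hux, hu]
        simp only [hmem, if_false]
        rw [show ((0:ℝ) - (1 - x ^ 2)) = -((1 - x) * (1 + x)) by ring]
        rw [Real.rpow_neg hy0.le, show ((2 : ℝ)) = ((2 : ℕ) : ℝ) by norm_num,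
          Real.rpow_natCast])
    have hset : {y : ℝ | ε < |y|} = Set.Iio (-ε) ∪ Set.Ioi ε := by
      ext y
      simp only [Set.mem_setOf_eq, Set.mem_union, Set.mem_Iio, Set.mem_Ioi, lt_abs]
      constructor
      · rintro (h | h); · right; exact h
        left; linarith
      · rintro (h | h); · right; linarith
        left; exact h
    have hIleft : IntegrableOn g (Set.Iio (-ε)) := by
      rw [← (Measure.measurePreserving_neg (volume : Measure ℝ)).integrableOn_comp_preimage
        (Homeomorph.neg ℝ).measurableEmbedding]
      have : (Neg.neg ⁻¹' Set.Iio (-ε) : Set ℝ) = Set.Ioi ε := by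
        ext y; simp [Set.mem_Iio, Set.mem_Ioi]
      rw [this]
      exact hl.1
    have hIleftval : ∫ y in Set.Iio (-ε), g y
        = 2 * x * Real.log ((1 + x) / ε) - (1 + x - ε) + -((1 - x) * (1 + x)) / (1 + x) := by
      rw [← integral_Iic_eq_integral_Iio, ← integral_comp_neg_Ioi]
      exact hl.2
    have hdisj : Disjoint (Set.Iio (-ε)) (Set.Ioi ε) := by
      apply Set.disjoint_left.2
      intro y hy hy'
      simp only [Set.mem_Iio] at hy
      simp only [Set.mem_Ioi] at hy'
      linarith
    rw [hset, setIntegral_union hdisj measurableSet_Ioi hIleft hr.1, hIleftval, hr.2]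
    have l1 : Real.log ((1 + x) / ε) = Real.log (1 + x) - Real.log ε :=
      Real.log_div hb.ne' hε0.ne'
    have l2 : Real.log ((1 - x) / ε) = Real.log (1 - x) - Real.log ε :=
      Real.log_div ha.ne' hε0.ne'
    have l3 : L = Real.log (1 - x) - Real.log (1 + x) := Real.log_div ha.ne' hb.ne'
    rw [l1, l2, l3]
    field_simp
    ring
  have hlim : Tendsto (fun ε : ℝ => -(4 + 2 * x * L) + 2 * ε) (nhdsWithin 0 (Set.Ioi 0))
      (nhds (-(4 + 2 * x * L))) := by
    have h0 : Tendsto (fun ε : ℝ => -(4 + 2 * x * L) + 2 * ε) (nhds 0)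
        (nhds (-(4 + 2 * x * L) + 2 * 0)) := by
      exact (tendsto_id.const_mul 2).const_add _
    rw [mul_zero, add_zero] at h0
    exact h0.mono_left nhdsWithin_le_nhds
  apply hlim.congr'
  filter_upwards [Ioo_mem_nhdsGT (show (0:ℝ) < min (1 - x) (1 + x) by positivity)]
    with ε hε
  exact (key ε hε).symm
end
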